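/- Let σ > 0 and Δ > 0. Then: (i) V(σ·√n, Δ)/√n → σ/√(2π) as n → ∞, so the multi-dimensional catalytic value grows at rate √n in the number n of independent uncertain attributes; and (ii) for every real n > 0, the function n ↦ V(σ·√n, Δ) has derivative φ(−Δ/(σ·√n))·σ/(2·√n) at n, which is strictly positive, so the catalytic value is increasing in n with diminishing marginal returns. (Multi-dimensional catalytic value, Proposition 12.) -/

import Mathlib

open MeasureTheory

/-- The standard normal density `φ`. -/
noncomputable def stdNormalPDF (x : ℝ) : ℝ :=
  (Real.sqrt (2 * Real.pi))⁻¹ * Real.exp (-x ^ 2 / 2)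

/-- The standard normal CDF `Φ`. -/
noncomputable def stdNormalCDF (x : ℝ) : ℝ :=
  ∫ t in Set.Iic x, stdNormalPDF t

/-- The catalytic value `V(σ, Δ) = -Δ·Φ(-Δ/σ) + σ·φ(-Δ/σ)`. -/
noncomputable def catalyticValue (σ Δ : ℝ) : ℝ :=
  -Δ * stdNormalCDF (-Δ / σ) + σ * stdNormalPDF (-Δ / σ)

open Filter Topology

lemma stdNormalPDF_eq (x : ℝ) :
    stdNormalPDF x = (Real.sqrt (2 * Real.pi))⁻¹ * Real.exp (-(1/2) * x ^ 2) := by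
  unfold stdNormalPDF; ring_nf

lemma stdNormalPDF_pos (x : ℝ) : 0 < stdNormalPDF x := by
  unfold stdNormalPDF
  have := Real.pi_pos
  positivity

lemma stdNormalPDF_continuous : Continuous stdNormalPDF := by
  unfold stdNormalPDF
  fun_prop

lemma stdNormalPDF_integrable : Integrable stdNormalPDF := by
  have h : stdNormalPDF = fun x => (Real.sqrt (2 * Real.pi))⁻¹ * Real.exp (-(1/2) * x ^ 2) :=
    funext stdNormalPDF_eq
  rw [h]
  exact (integrable_exp_neg_mul_sq one_half_pos).const_mul _

lemma stdNormalPDF_integral : ∫ x, stdNormalPDF x = 1 := by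
  simp_rw [stdNormalPDF_eq]
  rw [integral_const_mul, integral_gaussian]
  have : Real.pi / (1/2 : ℝ) = 2 * Real.pi := by ring
  rw [this, inv_mul_cancel₀]
  positivity

lemma stdNormalCDF_nonneg (x : ℝ) : 0 ≤ stdNormalCDF x :=
  setIntegral_nonneg measurableSet_Iic fun t _ => (stdNormalPDF_pos t).le

lemma stdNormalCDF_le_one (x : ℝ) : stdNormalCDF x ≤ 1 := by
  rw [← stdNormalPDF_integral]
  exact setIntegral_le_integral stdNormalPDF_integrable
    (ae_of_all _ fun t => (stdNormalPDF_pos t).le)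

lemma stdNormalCDF_hasDerivAt (x : ℝ) :
    HasDerivAt stdNormalCDF (stdNormalPDF x) x := by
  have key : ∀ y : ℝ, stdNormalCDF y = stdNormalCDF 0 + ∫ t in (0:ℝ)..y, stdNormalPDF t := by
    intro y
    have := intervalIntegral.integral_Iic_sub_Iic
      (stdNormalPDF_integrable.integrableOn (s := Set.Iic 0))
      (stdNormalPDF_integrable.integrableOn (s := Set.Iic y))
    unfold stdNormalCDF
    linarith [this]
  have h : HasDerivAt (fun y => stdNormalCDF 0 + ∫ t in (0:ℝ)..y, stdNormalPDF t)
      (stdNormalPDF x) x := by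
    exact (intervalIntegral.integral_hasDerivAt_right
      (stdNormalPDF_integrable.intervalIntegrable)
      (stdNormalPDF_continuous.stronglyMeasurable.stronglyMeasurableAtFilter)
      stdNormalPDF_continuous.continuousAt).const_add _
  exact h.congr_of_eventuallyEq (Filter.Eventually.of_forall key)

lemma stdNormalPDF_hasDerivAt (x : ℝ) :
    HasDerivAt stdNormalPDF (-x * stdNormalPDF x) x := by
  have h1 : HasDerivAt (fun x : ℝ => -x ^ 2 / 2) (-x) x := by
    have := ((hasDerivAt_pow 2 x).neg.div_const 2)
    refine this.congr_deriv ?_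
    push_cast
    ring
  have h2 := (h1.exp).const_mul (Real.sqrt (2 * Real.pi))⁻¹
  have h3 : HasDerivAt (fun x : ℝ => (Real.sqrt (2 * Real.pi))⁻¹ * Real.exp (-x ^ 2 / 2))
      (-x * ((Real.sqrt (2 * Real.pi))⁻¹ * Real.exp (-x ^ 2 / 2))) x := by
    refine h2.congr_deriv ?_
    ring
  exact h3

lemma catalyticValue_hasDerivAt (Δ : ℝ) {s : ℝ} (hs : s ≠ 0) :
    HasDerivAt (fun s => catalyticValue s Δ) (stdNormalPDF (-Δ / s)) s := by
  have hu : HasDerivAt (fun s : ℝ => -Δ / s) (Δ / s ^ 2) s := by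
    have := (hasDerivAt_inv hs).const_mul (-Δ)
    simp only [div_eq_mul_inv]
    refine this.congr_deriv ?_
    field_simp
  have hΦ := (stdNormalCDF_hasDerivAt (-Δ / s)).comp s hu
  have hφ := (stdNormalPDF_hasDerivAt (-Δ / s)).comp s hu
  have h1 := hΦ.const_mul (-Δ)
  have h2 := (hasDerivAt_id s).mul hφ
  have h := h1.add h2
  simp only [Function.comp] at h
  have hfun : (fun s => catalyticValue s Δ) =
      fun s => -Δ * stdNormalCDF (-Δ / s) + id s * stdNormalPDF (-Δ / s) := rfl
  rw [hfun]
  refine h.congr_deriv ?_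
  field_simp
  simp only [id]
  ring

/-- Multi-dimensional catalytic value (Proposition 12): (i) `V(σ√n, Δ)/√n → σ/√(2π)`
as `n → ∞`; (ii) for every real `n > 0`, `n ↦ V(σ√n, Δ)` has strictly positive
derivative `φ(-Δ/(σ√n))·σ/(2√n)` at `n`. -/
theorem multidimensional_catalytic_value (σ Δ : ℝ) (hσ : 0 < σ) (hΔ : 0 < Δ) :
    Tendsto (fun n : ℝ => catalyticValue (σ * Real.sqrt n) Δ / Real.sqrt n)
      atTop (𝓝 (σ / Real.sqrt (2 * Real.pi))) ∧
    ∀ n : ℝ, 0 < n →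
      HasDerivAt (fun m : ℝ => catalyticValue (σ * Real.sqrt m) Δ)
        (stdNormalPDF (-Δ / (σ * Real.sqrt n)) * σ / (2 * Real.sqrt n)) n ∧
      0 < stdNormalPDF (-Δ / (σ * Real.sqrt n)) * σ / (2 * Real.sqrt n) := by
  have hsqrt_top : Tendsto Real.sqrt atTop atTop := by
    apply tendsto_atTop_atTop.mpr
    intro b
    refine ⟨b ^ 2, fun a ha => ?_⟩
    calc b ≤ |b| := le_abs_self b
      _ = Real.sqrt (b ^ 2) := (Real.sqrt_sq_eq_abs b).symm
      _ ≤ Real.sqrt a := Real.sqrt_le_sqrt ha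
  have hσsqrt_top : Tendsto (fun n : ℝ => σ * Real.sqrt n) atTop atTop :=
    hsqrt_top.const_mul_atTop hσ
  constructor
  · -- part (i)
    have hu : Tendsto (fun n : ℝ => -Δ / (σ * Real.sqrt n)) atTop (𝓝 0) :=
      tendsto_const_nhds.div_atTop hσsqrt_top
    have hterm1 : Tendsto (fun n : ℝ =>
        -Δ * stdNormalCDF (-Δ / (σ * Real.sqrt n)) / Real.sqrt n) atTop (𝓝 0) := by
      refine Tendsto.div_atTop (a := -Δ * stdNormalCDF 0) ?_ hsqrt_top
      exact (((stdNormalCDF_hasDerivAt 0).continuousAt.tendsto.comp hu).const_mul (-Δ))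
    have hterm2 : Tendsto (fun n : ℝ =>
        σ * stdNormalPDF (-Δ / (σ * Real.sqrt n))) atTop
        (𝓝 (σ * stdNormalPDF 0)) :=
      ((stdNormalPDF_continuous.continuousAt.tendsto.comp hu).const_mul σ)
    have hsum := hterm1.add hterm2
    have hval : (0 : ℝ) + σ * stdNormalPDF 0 = σ / Real.sqrt (2 * Real.pi) := by
      unfold stdNormalPDF
      norm_num
      rw [div_eq_mul_inv]
      ring
    rw [hval] at hsum
    apply hsum.congr'
    filter_upwards [eventually_ge_atTop (1 : ℝ)] with n hn
    have hn0 : (0 : ℝ) < n := by linarith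
    have hs : Real.sqrt n ≠ 0 := by positivity
    unfold catalyticValue
    field_simp
  · -- part (ii)
    intro n hn
    have hs : Real.sqrt n ≠ 0 := by positivity
    have hss : σ * Real.sqrt n ≠ 0 := by positivity
    constructor
    · have hsqd : HasDerivAt (fun m : ℝ => σ * Real.sqrt m)
          (σ * (1 / (2 * Real.sqrt n))) n :=
        (Real.hasDerivAt_sqrt hn.ne').const_mul σ
      have h := (catalyticValue_hasDerivAt Δ hss).comp n hsqd
      refine h.congr_deriv ?_
      field_simp
    · have := stdNormalPDF_pos (-Δ / (σ * Real.sqrt n))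
      have h2 : (0:ℝ) < Real.sqrt n := by positivity
      positivity
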